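/- Let n ≥ 2, let σ ∈ S_n satisfy σ(n) = n, and let 1 ≤ i < n. Define σ' := σ∘(i n), i.e. σ'(i) = n, σ'(n) = σ(i), and σ'(x) = σ(x) for all x ∉ {i, n}. Then: (a) sor(σ') = sor(σ) + (n − i); (b) cyc(σ') = cyc(σ) − 1; (c) lmic1(σ') = lmic1(σ) + 1 if i = 1, and lmic1(σ') = lmic1(σ) if i > 1. -/

import Mathlib

open scoped Classical

namespace SortIdx

variable {n : ℕ}

noncomputable section

/-- The inversion number `inv σ := #{(i,j) : i < j ∧ σ i > σ j}`. -/
def inv (σ : Equiv.Perm (Fin n)) : ℕ :=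
  (Finset.univ.filter (fun p : Fin n × Fin n => p.1 < p.2 ∧ σ p.2 < σ p.1)).card

/-- The inversion set `Inv σ := {(i,j) : i < j ∧ σ i > σ j}`. -/
def InvSet (σ : Equiv.Perm (Fin n)) : Finset (Fin n × Fin n) :=
  Finset.univ.filter (fun p : Fin n × Fin n => p.1 < p.2 ∧ σ p.2 < σ p.1)

/-- Right-to-left minimum letters. -/
def RmilSet (σ : Equiv.Perm (Fin n)) : Finset (Fin n) :=
  (Finset.univ.filter (fun i => ∀ j, i < j → σ i < σ j)).image σ

/-- The number of right-to-left minima. -/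
def rmin (σ : Equiv.Perm (Fin n)) : ℕ := (RmilSet σ).card

/-- Right-to-left minimum places. -/
def RmipSet (σ : Equiv.Perm (Fin n)) : Finset (Fin n) :=
  Finset.univ.filter (fun i => ∀ j, i < j → σ i < σ j)

/-- Right-to-left maximum letters. -/
def RmalSet (σ : Equiv.Perm (Fin n)) : Finset (Fin n) :=
  (Finset.univ.filter (fun i => ∀ j, i < j → σ j < σ i)).image σ

/-- The number of right-to-left maxima. -/
def rmax (σ : Equiv.Perm (Fin n)) : ℕ := (RmalSet σ).card

/-- Left-to-right minimum letters. -/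
def LmilSet (σ : Equiv.Perm (Fin n)) : Finset (Fin n) :=
  (Finset.univ.filter (fun i => ∀ j, j < i → σ i < σ j)).image σ

/-- The number of left-to-right minima. -/
def lmin (σ : Equiv.Perm (Fin n)) : ℕ := (LmilSet σ).card

/-- Left-to-right minimum places. -/
def LmipSet (σ : Equiv.Perm (Fin n)) : Finset (Fin n) :=
  Finset.univ.filter (fun i => ∀ j, j < i → σ i < σ j)

/-- Left-to-right maximum letters. -/
def LmalSet (σ : Equiv.Perm (Fin n)) : Finset (Fin n) :=
  (Finset.univ.filter (fun i => ∀ j, j < i → σ j < σ i)).image σ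

/-- The number of left-to-right maxima. -/
def lmax (σ : Equiv.Perm (Fin n)) : ℕ := (LmalSet σ).card

/-- Left-to-right maximum places. -/
def LmapSet (σ : Equiv.Perm (Fin n)) : Finset (Fin n) :=
  Finset.univ.filter (fun i => ∀ j, j < i → σ j < σ i)

/-- `Cyc σ`: the set of smallest elements of the cycles of `σ`
(`i` is smallest in its cycle iff `i ≤ σ^k i` for all `k`). -/
def CycSet (σ : Equiv.Perm (Fin n)) : Finset (Fin n) :=
  Finset.univ.filter (fun i => ∀ k : ℕ, i ≤ (σ ^ k) i)

/-- The number of cycles of `σ` (fixed points included). -/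
def cyc (σ : Equiv.Perm (Fin n)) : ℕ := (CycSet σ).card

/-- One step of the sorting process computing the sorting index: repeatedly
put the largest not-yet-fixed letter `j` in its place by the transposition
`(i j)` where `i = σ⁻¹ j` is the place of the letter `j`, recording the
distance `j - i`.  This produces the unique factorization
`σ = (i₁ j₁)(i₂ j₂)⋯(i_k j_k)` with `j₁ < ⋯ < j_k`, `i_r < j_r`, and sums
the `j_r - i_r`.  The fuel `n` is always sufficient. -/
def sorAux : ℕ → Equiv.Perm (Fin n) → ℕ
  | 0, _ => 0
  | (fuel + 1), σ =>
    if h : σ.support.Nonempty then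
      (((σ.support.max' h : Fin n) : ℕ) - ((σ⁻¹ (σ.support.max' h) : Fin n) : ℕ)) +
        sorAux fuel (σ * Equiv.swap (σ⁻¹ (σ.support.max' h)) (σ.support.max' h))
    else 0

/-- The sorting index of Petersen. -/
def sor (σ : Equiv.Perm (Fin n)) : ℕ := sorAux n σ

theorem bcode_exists (σ : Equiv.Perm (Fin n)) (i : Fin n) :
    ∃ k : ℕ, 0 < k ∧ (σ⁻¹ ^ k) i ≤ i := by
  refine ⟨orderOf σ⁻¹, orderOf_pos σ⁻¹, ?_⟩
  rw [pow_orderOf_eq_one]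
  simp

/-- The `B`-code of `σ`: `Bcode σ i = σ^(-k) i` where `k ≥ 1` is minimal with
`σ^(-k) i ≤ i`. -/
def Bcode (σ : Equiv.Perm (Fin n)) (i : Fin n) : Fin n :=
  (σ⁻¹ ^ (Nat.find (bcode_exists σ i))) i

/-- The `B`-code as a sequence in `L_n` (1-indexed values: the entry at place
`i` is the 1-indexed name of the letter `Bcode σ i`). -/
def BcodeNat (σ : Equiv.Perm (Fin n)) : Fin n → ℕ :=
  fun i => ((Bcode σ i : Fin n) : ℕ) + 1

/-- The Lehmer code: `Leh σ i = #{j : j ≤ i ∧ σ j ≤ σ i}` (1-indexed values). -/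
def Leh (σ : Equiv.Perm (Fin n)) : Fin n → ℕ :=
  fun i => (Finset.univ.filter (fun j => j ≤ i ∧ σ j ≤ σ i)).card

/-- The `A`-code: `A σ := Leh σ⁻¹`. -/
def Acode (σ : Equiv.Perm (Fin n)) : Fin n → ℕ := Leh σ⁻¹

/-- `O(code) := {i : code i = 1}` (for `1`-indexed codes in `L_n`). -/
def Oset (code : Fin n → ℕ) : Finset (Fin n) :=
  Finset.univ.filter (fun i => code i = 1)

/-- `Lmic1 σ := O(B σ)`, the set of places where the `B`-code equals `1`,
equivalently the left-to-right minima of the shifted cycle containing `1`. -/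
def Lmic1Set (σ : Equiv.Perm (Fin n)) : Finset (Fin n) :=
  Oset (BcodeNat σ)

/-- `lmic1 σ := #{i : (B σ)_i = 1}`. -/
def lmic1 (σ : Equiv.Perm (Fin n)) : ℕ := (Lmic1Set σ).card

/-- The bijection `φ = B⁻¹ ∘ A` of Foata–Han. -/
def phi (σ : Equiv.Perm (Fin n)) : Equiv.Perm (Fin n) :=
  Function.invFun BcodeNat (Acode σ)

/-- The algorithm computing the induced set of a code: the list argument is
the list of places still to process (from the last to the first), `S` is the
set of letters still available.  At place `i` we pick the `(code i)`-th
smallest element `l` of `S` (1-indexed), put the pairs `(l, j)` for `j ∈ S`,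
`j > l` into the answer and remove `l` from `S`. -/
def inducedAux : List (Fin n) → Finset (Fin n) → (Fin n → ℕ) → Finset (Fin n × Fin n)
  | [], _, _ => ∅
  | (i :: is), S, code =>
      ((S.filter (fun j => (S.sort (· ≤ ·)).getD (code i - 1) i < j)).image
          (fun j => ((S.sort (· ≤ ·)).getD (code i - 1) i, j))) ∪
        inducedAux is (S.erase ((S.sort (· ≤ ·)).getD (code i - 1) i)) code

/-- The induced set `⟨code⟩` of a code in `L_n`. -/
def induced (code : Fin n → ℕ) : Finset (Fin n × Fin n) :=
  inducedAux (List.finRange n).reverse Finset.univ code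

/-- The sorting set `Sor σ := ⟨B σ⟩`. -/
def SorSet (σ : Equiv.Perm (Fin n)) : Finset (Fin n × Fin n) :=
  induced (BcodeNat σ)

/-- The descent set (as a set of places `i`, `0`-indexed, such that
`σ i > σ (i+1)`). -/
def DesSet (σ : Equiv.Perm (Fin n)) : Finset (Fin n) :=
  Finset.univ.filter (fun i => ∃ h : (i : ℕ) + 1 < n, σ ⟨(i : ℕ) + 1, h⟩ < σ i)

/-- The major index (descents being counted `1`-indexed). -/
def maj (σ : Equiv.Perm (Fin n)) : ℕ :=
  ∑ i ∈ DesSet σ, ((i : ℕ) + 1)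

/-- The charge `chg σ := ∑_{i ∈ Des σ⁻¹} (n - i)` (descents `1`-indexed). -/
def chg (σ : Equiv.Perm (Fin n)) : ℕ :=
  ∑ i ∈ DesSet σ⁻¹, (n - ((i : ℕ) + 1))

/-- The reverse-complement of `σ` : `τ i = n + 1 - σ (n + 1 - i)` (1-indexed). -/
def revcomp (σ : Equiv.Perm (Fin n)) : Equiv.Perm (Fin n) :=
  Fin.revPerm * σ * Fin.revPerm

/-- The reverse major index `rmaj σ := maj (revcomp σ)`. -/
def rmaj (σ : Equiv.Perm (Fin n)) : ℕ := maj (revcomp σ)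

end

end SortIdx

namespace SortIdx

variable {n : ℕ}

lemma support_step (σ : Equiv.Perm (Fin n)) (h : σ.support.Nonempty) :
    (σ * Equiv.swap (σ⁻¹ (σ.support.max' h)) (σ.support.max' h)).support ⊆
      σ.support.erase (σ.support.max' h) := by
  set j := σ.support.max' h with hj
  set a := σ⁻¹ j with ha
  have hja : σ a = j := σ.apply_symm_apply j
  have hjs : j ∈ σ.support := σ.support.max'_mem h
  intro x hx
  rw [Equiv.Perm.mem_support] at hx
  rw [Finset.mem_erase, Equiv.Perm.mem_support]
  constructor
  · rintro rfl
    apply hx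
    rw [Equiv.Perm.mul_apply, Equiv.swap_apply_right, hja]
  · intro hfix
    apply hx
    have hxj : x ≠ j := by rintro rfl; exact (Equiv.Perm.mem_support.mp hjs) hfix
    have hxa : x ≠ a := by
      rintro rfl
      exact hxj (hja.symm.trans hfix).symm
    rw [Equiv.Perm.mul_apply, Equiv.swap_apply_of_ne_of_ne hxa hxj, hfix]

lemma sorAux_succ : ∀ (fuel : ℕ) (σ : Equiv.Perm (Fin n)), σ.support.card ≤ fuel →
    sorAux (fuel + 1) σ = sorAux fuel σ := by
  intro fuel
  induction fuel with
  | zero =>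
    intro σ h
    have hs : σ.support = ∅ := Finset.card_eq_zero.mp (Nat.le_zero.mp h)
    simp only [sorAux]
    rw [dif_neg (by simp [hs])]
  | succ fuel ih =>
    intro σ h
    by_cases hs : σ.support.Nonempty
    · rw [sorAux, dif_pos hs]
      conv_rhs => rw [sorAux, dif_pos hs]
      congr 1
      apply ih
      have h1 : (σ * Equiv.swap (σ⁻¹ (σ.support.max' hs)) (σ.support.max' hs)).support.card ≤
          (σ.support.erase (σ.support.max' hs)).card := Finset.card_le_card (support_step σ hs)
      rw [Finset.card_erase_of_mem (σ.support.max'_mem hs)] at h1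
      omega
    · rw [sorAux, dif_neg hs, sorAux, dif_neg hs]

lemma sor_mul_swap (σ : Equiv.Perm (Fin n)) (i m : Fin n)
    (htop : ∀ x : Fin n, x ≤ m) (hσ : σ m = m) (him : i ≠ m) (hm : (m : ℕ) + 1 = n) :
    sor (σ * Equiv.swap i m) = sor σ + ((m : ℕ) - (i : ℕ)) := by
  obtain ⟨n', rfl⟩ : ∃ n', n = n' + 1 := ⟨(m : ℕ), hm.symm⟩
  set σ' := σ * Equiv.swap i m with hσ'def
  have hσ'i : σ' i = m := by rw [hσ'def, Equiv.Perm.mul_apply, Equiv.swap_apply_left, hσ]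
  have hσ'm : σ' m = σ i := by rw [hσ'def, Equiv.Perm.mul_apply, Equiv.swap_apply_right]
  have hσim : σ i ≠ m := fun h => him (σ.injective (by rw [h, hσ]))
  have hmem : m ∈ σ'.support := Equiv.Perm.mem_support.mpr (by rw [hσ'm]; exact hσim)
  have hne : σ'.support.Nonempty := ⟨m, hmem⟩
  have hmax : σ'.support.max' hne = m := le_antisymm (htop _) (Finset.le_max' _ _ hmem)
  have hinv : σ'⁻¹ m = i := by rw [← hσ'i]; exact σ'.symm_apply_apply i
  have hcancel : σ' * Equiv.swap i m = σ := by
    rw [hσ'def, mul_assoc, Equiv.swap_mul_self, mul_one]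
  have hcard : σ.support.card ≤ n' := by
    have hsub : σ.support ⊆ Finset.univ.erase m := by
      intro x hx
      rw [Finset.mem_erase]
      refine ⟨?_, Finset.mem_univ x⟩
      rintro rfl
      exact (Equiv.Perm.mem_support.mp hx) hσ
    have := Finset.card_le_card hsub
    rw [Finset.card_erase_of_mem (Finset.mem_univ m)] at this
    simpa using this
  rw [sor, sor, sorAux, dif_pos hne, hmax, hinv, hcancel, ← sorAux_succ n' σ hcard]
  omega

lemma pow_apply_fix (σ : Equiv.Perm (Fin n)) (m : Fin n) (hσ : σ m = m) :
    ∀ k : ℕ, (σ ^ k) m = m := by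
  intro k
  induction k with
  | zero => rfl
  | succ k ih => rw [pow_succ, Equiv.Perm.mul_apply, hσ, ih]

lemma cycSet_mul_swap (σ : Equiv.Perm (Fin n)) (i m : Fin n)
    (htop : ∀ x : Fin n, x ≤ m) (hσ : σ m = m) (him : i ≠ m) :
    CycSet (σ * Equiv.swap i m) = (CycSet σ).erase m := by
  set σ' := σ * Equiv.swap i m with hσ'def
  have happ : ∀ y, σ' y = σ (Equiv.swap i m y) := fun y => rfl
  have hσ'i : σ' i = m := by rw [happ, Equiv.swap_apply_left, hσ]
  have hσ'm : σ' m = σ i := by rw [happ, Equiv.swap_apply_right]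
  have hσim : σ i ≠ m := fun h => him (σ.injective (by rw [h, hσ]))
  have hpowm : ∀ k : ℕ, (σ ^ k) m = m := pow_apply_fix σ m hσ
  have hstep : ∀ (τ : Equiv.Perm (Fin n)) (k : ℕ) (x : Fin n),
      (τ ^ (k + 1)) x = τ ((τ ^ k) x) := fun τ k x => by
    rw [pow_succ', Equiv.Perm.mul_apply]
  have hfixm : ∀ (j : ℕ) (x : Fin n), (σ ^ j) x = m → x = m := by
    intro j x hx
    exact (σ ^ j).injective (hx.trans (hpowm j).symm)
  have claimA : ∀ x : Fin n, x ≠ m → ∀ k : ℕ,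
      (∃ j, (σ' ^ k) x = (σ ^ j) x) ∨ ((σ' ^ k) x = m ∧ ∃ j, (σ ^ j) x = i) := by
    intro x hx k
    induction k with
    | zero => exact Or.inl ⟨0, rfl⟩
    | succ k ih =>
      rw [hstep]
      rcases ih with ⟨j, hj⟩ | ⟨hm', j, hj⟩
      · rw [hj]
        by_cases hyi : (σ ^ j) x = i
        · right
          rw [hyi, hσ'i]
          exact ⟨rfl, j, hyi⟩
        · have hym : (σ ^ j) x ≠ m := fun h => hx (hfixm j x h)
          left
          refine ⟨j + 1, ?_⟩
          rw [happ, Equiv.swap_apply_of_ne_of_ne hyi hym, hstep]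
      · rw [hm', hσ'm]
        left
        exact ⟨j + 1, by rw [hstep, hj]⟩
  have claimB : ∀ x : Fin n, x ≠ m → ∀ k : ℕ,
      ∃ j, (σ ^ k) x = (σ' ^ j) x ∧ (σ ^ k) x ≠ m := by
    intro x hx k
    induction k with
    | zero => exact ⟨0, rfl, hx⟩
    | succ k ih =>
      obtain ⟨j, hj, hne⟩ := ih
      have hnem : σ ((σ ^ k) x) ≠ m := fun h => hne (hfixm 1 _ (by rwa [pow_one]))
      by_cases hyi : (σ ^ k) x = i
      · refine ⟨j + 2, ?_, by rw [hstep]; exact hnem⟩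
        rw [hstep, hyi]
        rw [hstep, hstep, ← hj, hyi, hσ'i, hσ'm]
      · refine ⟨j + 1, ?_, by rw [hstep]; exact hnem⟩
        rw [hstep, hstep, ← hj, happ, Equiv.swap_apply_of_ne_of_ne hyi hne]
  ext x
  simp only [CycSet, Finset.mem_filter, Finset.mem_univ, true_and, Finset.mem_erase]
  constructor
  · intro hx
    have hxm : x ≠ m := by
      rintro rfl
      have h1 := hx 1
      rw [pow_one] at h1
      have h2 := le_antisymm (htop _) h1
      exact hσim (hσ'm.symm.trans h2)
    refine ⟨hxm, fun k => ?_⟩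
    obtain ⟨j, hj, _⟩ := claimB x hxm k
    rw [hj]
    exact hx j
  · rintro ⟨hxm, hx⟩ k
    rcases claimA x hxm k with ⟨j, hj⟩ | ⟨hm', _⟩
    · rw [hj]; exact hx j
    · rw [hm']; exact htop x

lemma bcode_eq_of (σ : Equiv.Perm (Fin n)) (x : Fin n) (k : ℕ) (hk : 0 < k)
    (h1 : (σ⁻¹ ^ k) x ≤ x) (h2 : ∀ l, 0 < l → l < k → x < (σ⁻¹ ^ l) x) :
    Bcode σ x = (σ⁻¹ ^ k) x := by
  have hfind : Nat.find (bcode_exists σ x) = k := by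
    rw [Nat.find_eq_iff]
    exact ⟨⟨hk, h1⟩, fun l hl hc => absurd hc.2 (not_le.mpr (h2 l hc.1 hl))⟩
  rw [Bcode, hfind]

lemma bcode_sim (σ : Equiv.Perm (Fin n)) (i m : Fin n)
    (htop : ∀ x : Fin n, x ≤ m) (hσ : σ m = m) (him : i ≠ m) (x : Fin n) (hx : x ≠ m) :
    ∀ j : ℕ, (∀ l, 0 < l → l < j → x < (σ⁻¹ ^ l) x) →
      ∃ j', j ≤ j' ∧ (0 < j' → 0 < j) ∧ ((σ * Equiv.swap i m)⁻¹ ^ j') x = (σ⁻¹ ^ j) x ∧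
        ∀ l, 0 < l → l < j' → x < ((σ * Equiv.swap i m)⁻¹ ^ l) x := by
  set σ' := σ * Equiv.swap i m with hσ'def
  have hinv' : σ'⁻¹ = Equiv.swap i m * σ⁻¹ := by
    rw [hσ'def, mul_inv_rev, Equiv.swap_inv]
  have happ' : ∀ y, σ'⁻¹ y = Equiv.swap i m (σ⁻¹ y) := fun y => by
    rw [hinv', Equiv.Perm.mul_apply]
  have hinvm : σ⁻¹ m = m := by
    conv_lhs => rw [← hσ]
    exact σ.symm_apply_apply m
  have hpowinvm : ∀ j : ℕ, (σ⁻¹ ^ j) m = m := pow_apply_fix σ⁻¹ m hinvm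
  have hstep : ∀ (τ : Equiv.Perm (Fin n)) (k : ℕ) (y : Fin n),
      (τ ^ (k + 1)) y = τ ((τ ^ k) y) := fun τ k y => by
    rw [pow_succ', Equiv.Perm.mul_apply]
  have hxltm : x < m := lt_of_le_of_ne (htop x) hx
  intro j
  induction j with
  | zero =>
    intro _
    exact ⟨0, le_rfl, fun h => h, rfl, fun l h0 hl => absurd hl (by omega)⟩
  | succ j ih =>
    intro hguard
    obtain ⟨j', hle, h0imp, heq, hguard'⟩ := ih (fun l h0 hl => hguard l h0 (by omega))
    have hym : (σ⁻¹ ^ j) x ≠ m := fun h => hx ((σ⁻¹ ^ j).injective (h.trans (hpowinvm j).symm))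
    have hzm : σ⁻¹ ((σ⁻¹ ^ j) x) ≠ m := fun h => hym (σ⁻¹.injective (h.trans hinvm.symm))
    have hguardj' : ∀ l, 0 < l → l < j' + 1 → x < (σ'⁻¹ ^ l) x := by
      intro l h0 hl
      rcases Nat.lt_or_ge l j' with h | h
      · exact hguard' l h0 h
      · have hlj : l = j' := by omega
        subst hlj
        rw [heq]
        exact hguard j (h0imp h0) (by omega)
    have hval : (σ'⁻¹ ^ (j' + 1)) x = Equiv.swap i m (σ⁻¹ ((σ⁻¹ ^ j) x)) := by
      rw [hstep, heq, happ']
    by_cases hzi : σ⁻¹ ((σ⁻¹ ^ j) x) = i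
    · refine ⟨j' + 2, by omega, fun _ => Nat.succ_pos j, ?_, ?_⟩
      · rw [hstep, hval, hzi, Equiv.swap_apply_left, happ', hinvm, Equiv.swap_apply_right,
          ← hzi, hstep]
      · intro l h0 hl
        rcases Nat.lt_or_ge l (j' + 1) with h | h
        · exact hguardj' l h0 h
        · have hlj : l = j' + 1 := by omega
          subst hlj
          rw [hval, hzi, Equiv.swap_apply_left]
          exact hxltm
    · refine ⟨j' + 1, by omega, fun _ => Nat.succ_pos j, ?_, hguardj'⟩
      rw [hval, Equiv.swap_apply_of_ne_of_ne hzi hzm, hstep]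

lemma bcode_mul_swap_ne (σ : Equiv.Perm (Fin n)) (i m : Fin n)
    (htop : ∀ x : Fin n, x ≤ m) (hσ : σ m = m) (him : i ≠ m) (x : Fin n) (hx : x ≠ m) :
    Bcode (σ * Equiv.swap i m) x = Bcode σ x := by
  set k := Nat.find (bcode_exists σ x) with hk
  have hspec := Nat.find_spec (bcode_exists σ x)
  have hmin : ∀ l, 0 < l → l < k → x < (σ⁻¹ ^ l) x := by
    intro l h0 hl
    by_contra hc
    exact Nat.find_min (bcode_exists σ x) hl ⟨h0, not_lt.mp hc⟩
  obtain ⟨k', hk'ge, _, heq, hguard⟩ := bcode_sim σ i m htop hσ him x hx k hmin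
  have h0k' : 0 < k' := lt_of_lt_of_le hspec.1 hk'ge
  rw [bcode_eq_of _ x k' h0k' (by rw [heq]; exact hspec.2) hguard, heq, Bcode, ← hk]

lemma bcode_self_top (σ : Equiv.Perm (Fin n)) (m : Fin n) (hσ : σ m = m) :
    Bcode σ m = m := by
  have hinvm : σ⁻¹ m = m := by
    conv_lhs => rw [← hσ]
    exact σ.symm_apply_apply m
  rw [bcode_eq_of σ m 1 Nat.one_pos (by rw [pow_one, hinvm]) (fun l h0 hl => by omega),
    pow_one, hinvm]

lemma bcode_mul_swap_top (σ : Equiv.Perm (Fin n)) (i m : Fin n)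
    (htop : ∀ x : Fin n, x ≤ m) (hσ : σ m = m) : Bcode (σ * Equiv.swap i m) m = i := by
  set σ' := σ * Equiv.swap i m with hσ'def
  have hinv' : σ'⁻¹ m = i := by
    have : σ' i = m := by
      rw [hσ'def, Equiv.Perm.mul_apply, Equiv.swap_apply_left, hσ]
    rw [← this]; exact σ'.symm_apply_apply i
  rw [bcode_eq_of σ' m 1 Nat.one_pos (by rw [pow_one, hinv']; exact htop i)
    (fun l h0 hl => by omega), pow_one, hinv']

lemma mem_lmic1 (σ : Equiv.Perm (Fin n)) (x : Fin n) :
    x ∈ Lmic1Set σ ↔ ((Bcode σ x : Fin n) : ℕ) = 0 := by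
  simp [Lmic1Set, Oset, BcodeNat]

end SortIdx

/-- For `σ ∈ Sₙ` fixing the largest letter `n` and
`1 ≤ i < n` (here `0`-indexed: `i < n-1` and the largest letter is `⟨n-1,_⟩`),
let `σ' = σ ∘ (i n)`.  Then `sor σ' = sor σ + (n - i)`,
`cyc σ' = cyc σ - 1`, and `lmic₁ σ' = lmic₁ σ + 1` if `i = 1` while
`lmic₁ σ' = lmic₁ σ` if `i > 1`. -/
theorem sor_cyc_lmic1_of_mul_swap (n : ℕ) (hn : 2 ≤ n) (σ : Equiv.Perm (Fin n)) (i : Fin n)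
    (hσ : σ ⟨n - 1, by omega⟩ = ⟨n - 1, by omega⟩) (hi : (i : ℕ) < n - 1) :
    SortIdx.sor (σ * Equiv.swap i ⟨n - 1, by omega⟩) = SortIdx.sor σ + (n - 1 - (i : ℕ)) ∧
    SortIdx.cyc (σ * Equiv.swap i ⟨n - 1, by omega⟩) + 1 = SortIdx.cyc σ ∧
    ((i : ℕ) = 0 →
      SortIdx.lmic1 (σ * Equiv.swap i ⟨n - 1, by omega⟩) = SortIdx.lmic1 σ + 1) ∧
    ((i : ℕ) ≠ 0 →
      SortIdx.lmic1 (σ * Equiv.swap i ⟨n - 1, by omega⟩) = SortIdx.lmic1 σ) := by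
  set m : Fin n := ⟨n - 1, by omega⟩ with hmdef
  have htop : ∀ x : Fin n, x ≤ m := fun x => by
    have hx := x.isLt
    rw [Fin.le_def]
    show (x : ℕ) ≤ n - 1
    omega
  have him : i ≠ m := by
    intro h
    rw [Fin.ext_iff] at h
    have : (m : ℕ) = n - 1 := rfl
    omega
  have hmval : (m : ℕ) = n - 1 := rfl
  have hmem : m ∈ SortIdx.CycSet σ := by
    simp only [SortIdx.CycSet, Finset.mem_filter, Finset.mem_univ, true_and]
    intro k
    rw [SortIdx.pow_apply_fix σ m hσ k]
  have hBm' : SortIdx.Bcode (σ * Equiv.swap i m) m = i :=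
    SortIdx.bcode_mul_swap_top σ i m htop hσ
  have hBm : SortIdx.Bcode σ m = m := SortIdx.bcode_self_top σ m hσ
  refine ⟨?_, ?_, ?_, ?_⟩
  · rw [SortIdx.sor_mul_swap σ i m htop hσ him (by omega), hmval, Nat.add_comm] at *
  · rw [SortIdx.cyc, SortIdx.cyc, SortIdx.cycSet_mul_swap σ i m htop hσ him,
      Finset.card_erase_of_mem hmem]
    have hpos := Finset.card_pos.mpr ⟨m, hmem⟩
    omega
  · intro h0
    have hset : SortIdx.Lmic1Set (σ * Equiv.swap i m) = insert m (SortIdx.Lmic1Set σ) := by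
      ext x
      rw [SortIdx.mem_lmic1, Finset.mem_insert, SortIdx.mem_lmic1]
      by_cases hx : x = m
      · subst hx
        rw [hBm']
        simp [h0]
      · rw [SortIdx.bcode_mul_swap_ne σ i m htop hσ him x hx]
        simp [hx]
    have hnot : m ∉ SortIdx.Lmic1Set σ := by
      rw [SortIdx.mem_lmic1, hBm, hmval]
      omega
    rw [SortIdx.lmic1, SortIdx.lmic1, hset, Finset.card_insert_of_notMem hnot]
  · intro h0
    have hset : SortIdx.Lmic1Set (σ * Equiv.swap i m) = SortIdx.Lmic1Set σ := by
      ext x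
      rw [SortIdx.mem_lmic1, SortIdx.mem_lmic1]
      by_cases hx : x = m
      · subst hx
        rw [hBm', hBm, hmval]
        constructor
        · intro h; exact absurd h h0
        · intro h; omega
      · rw [SortIdx.bcode_mul_swap_ne σ i m htop hσ him x hx]
    rw [SortIdx.lmic1, SortIdx.lmic1, hset]
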